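/- Let C' be a column (strictly increasing is not assumed; it is a sequence with entries in [n]) of length c', and let S = {a₁ > a₂ > … > a_c} be a set of size c = c' or c'+1 such that the sorted increasing arrangements of S and C' placed side by side form weakly increasing rows. Define the root column Ĉ by placing entries of S from largest to smallest: each entry equal to some entry of C' is placed in the same row as that entry of C'; each entry not appearing in C' is placed next to the largest remaining entry of C' with an empty left box (or at the bottom if c = c'+1). Then the two-column configuration ĈC' is an HHL filling: it is weakly increasing in rows, has distinct entries in each column, and has no attacking pairs. -/

import Mathlib

/-- A two-column configuration with left column `C` (length `c`) and right
column `C'` (length `c'`) is an HHL filling: distinct entries in each column,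
no attacking pairs between the columns (a left cell strictly below a right cell
may not share its entry), and weakly increasing rows. -/
def HHL2 (c c' : ℕ) (C : Fin c → ℕ) (C' : Fin c' → ℕ) : Prop :=
  Function.Injective C ∧ Function.Injective C' ∧
  (∀ (i : Fin c) (k : Fin c'), (k : ℕ) < (i : ℕ) → C i ≠ C' k) ∧
  (∀ (i : Fin c) (h : (i : ℕ) < c'), C i ≤ C' ⟨i, h⟩)

/-- Proposition 4.1: the root configuration `CrootC'` is HHL. The root column `Croot`
is characterized by: it is an arrangement of `S`; entries common with `C'` are
placed in the matching row; distinct entries are paired with the distinct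
entries of `C'` in the same relative order; and when `c = c' + 1` the bottom
entry is the largest distinct entry. -/
theorem root_configuration_is_HHL (c c' : ℕ) (hcc : c = c' ∨ c = c' + 1)
    (C' : Fin c' → ℕ) (hC'inj : Function.Injective C')
    (S : Finset ℕ) (hScard : S.card = c)
    (ht : (Finset.image C' Finset.univ).card = c')
    -- the sorted increasing arrangements of S and C' side by side have weakly
    -- increasing rows:
    (hsorted : ∀ (i : Fin c') (h : (i : ℕ) < c),
      (S.orderIsoOfFin hScard ⟨(i : ℕ), h⟩).1 ≤
        ((Finset.image C' Finset.univ).orderIsoOfFin ht i).1)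
    (Croot : Fin c → ℕ)
    (hinj : Function.Injective Croot)
    (hrangeS : ∀ i, Croot i ∈ S)
    -- common entries are matched row-by-row:
    (hmatch : ∀ (i : Fin c) (j : Fin c'), Croot i = C' j → (i : ℕ) = (j : ℕ))
    -- distinct entries are paired in relative order:
    (horder : ∀ (i i' : Fin c) (hi : (i : ℕ) < c') (hi' : (i' : ℕ) < c'),
      (∀ j : Fin c', Croot i ≠ C' j) → (∀ j : Fin c', Croot i' ≠ C' j) →
      (Croot i < Croot i' ↔ C' ⟨(i : ℕ), hi⟩ < C' ⟨(i' : ℕ), hi'⟩))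
    -- when `c = c' + 1`, the bottom row holds the largest distinct entry:
    (hbottom : ∀ i : Fin c, (i : ℕ) = c' →
      ∀ i' : Fin c, (∀ j : Fin c', Croot i' ≠ C' j) → Croot i' ≤ Croot i) :
    HHL2 c c' Croot C' := by
  classical
  refine ⟨hinj, hC'inj, ?_, ?_⟩
  · intro i k hk hne
    have := hmatch i k hne
    omega
  · intro i h
    by_contra hnle
    push_neg at hnle
    -- hnle : C' ⟨i, h⟩ < Croot i
    have hxdist : ∀ j : Fin c', Croot i ≠ C' j := by
      intro j hje
      have hij := hmatch i j hje
      have hjeq : j = ⟨(i : ℕ), h⟩ := Fin.ext (by simp only [Fin.val_mk] at *; omega)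
      rw [hjeq] at hje
      omega
    have hsurj : ∀ v ∈ S, ∃ i' : Fin c, Croot i' = v := by
      have hR : Finset.image Croot Finset.univ = S := by
        apply Finset.eq_of_subset_of_card_le
        · intro v hv
          simp only [Finset.mem_image, Finset.mem_univ, true_and] at hv
          obtain ⟨i', rfl⟩ := hv
          exact hrangeS i'
        · rw [Finset.card_image_of_injective _ hinj, Finset.card_univ,
            Fintype.card_fin, hScard]
      intro v hv
      rw [← hR] at hv
      simpa using hv
    have hyS : C' ⟨(i : ℕ), h⟩ ∉ S := by
      intro hy
      obtain ⟨i'', hi''⟩ := hsurj _ hy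
      have := hmatch i'' ⟨(i : ℕ), h⟩ hi''
      have heq : i'' = i := Fin.ext (by simp only [Fin.val_mk] at *; omega)
      rw [heq] at hi''
      omega
    have hyT : C' ⟨(i : ℕ), h⟩ ∈ Finset.image C' Finset.univ :=
      Finset.mem_image_of_mem C' (Finset.mem_univ _)
    have hexlt : ∀ v ∈ S, v ≤ C' ⟨(i : ℕ), h⟩ →
        ∃ i' : Fin c, Croot i' = v ∧ (i' : ℕ) < c' := by
      intro v hvS hvy
      obtain ⟨i', hi'⟩ := hsurj v hvS
      refine ⟨i', hi', ?_⟩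
      by_contra hge
      push_neg at hge
      have hic : (i' : ℕ) < c := i'.2
      have hieq : (i' : ℕ) = c' := by omega
      have hvdist : ∀ j : Fin c', Croot i' ≠ C' j := by
        intro j hje
        have := hmatch i' j hje
        have := j.2
        omega
      have := hbottom i' hieq i hxdist
      omega
    let f : ℕ → ℕ := fun v =>
      if v ∈ Finset.image C' Finset.univ then v
      else if hex : ∃ i' : Fin c, Croot i' = v ∧ (i' : ℕ) < c' then
        C' ⟨(hex.choose : ℕ), hex.choose_spec.2⟩
      else 0
    have hfspec : ∀ v ∈ S.filter (· ≤ C' ⟨(i : ℕ), h⟩),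
        (v ∈ Finset.image C' Finset.univ ∧ f v = v) ∨
        (v ∉ Finset.image C' Finset.univ ∧ ∃ (i' : Fin c) (hi' : (i' : ℕ) < c'),
          Croot i' = v ∧ f v = C' ⟨(i' : ℕ), hi'⟩ ∧ (∀ j : Fin c', Croot i' ≠ C' j)) := by
      intro v hv
      rw [Finset.mem_filter] at hv
      by_cases hvT : v ∈ Finset.image C' Finset.univ
      · left
        refine ⟨hvT, ?_⟩
        show (if v ∈ Finset.image C' Finset.univ then v
          else if hex : ∃ i' : Fin c, Croot i' = v ∧ (i' : ℕ) < c' then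
            C' ⟨(hex.choose : ℕ), hex.choose_spec.2⟩ else 0) = v
        rw [if_pos hvT]
      · right
        refine ⟨hvT, ?_⟩
        have hex : ∃ i' : Fin c, Croot i' = v ∧ (i' : ℕ) < c' :=
          hexlt v hv.1 hv.2
        refine ⟨hex.choose, hex.choose_spec.2, hex.choose_spec.1, ?_, ?_⟩
        · show (if v ∈ Finset.image C' Finset.univ then v
            else if hex : ∃ i' : Fin c, Croot i' = v ∧ (i' : ℕ) < c' then
              C' ⟨(hex.choose : ℕ), hex.choose_spec.2⟩ else 0) = _
          rw [if_neg hvT, dif_pos hex]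
        · intro j hje
          apply hvT
          have hvj : v = C' j := by rw [← hex.choose_spec.1, hje]
          rw [hvj]
          exact Finset.mem_image_of_mem C' (Finset.mem_univ _)
    have hmaps : ∀ v ∈ S.filter (· ≤ C' ⟨(i : ℕ), h⟩),
        f v ∈ (Finset.image C' Finset.univ).filter (· < C' ⟨(i : ℕ), h⟩) := by
      intro v hv
      have hvmem := hv
      rw [Finset.mem_filter] at hvmem
      rcases hfspec v hv with ⟨hvT, hfv⟩ | ⟨hvT, i', hi', hroot, hfv, hdist⟩
      · rw [Finset.mem_filter, hfv]
        have hne : v ≠ C' ⟨(i : ℕ), h⟩ := fun he => hyS (he ▸ hvmem.1)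
        refine ⟨hvT, ?_⟩
        have := hvmem.2
        omega
      · rw [Finset.mem_filter, hfv]
        refine ⟨Finset.mem_image_of_mem C' (Finset.mem_univ _), ?_⟩
        have hvx : Croot i' < Croot i := by
          have hvy := hvmem.2
          omega
        exact (horder i' i hi' h hdist hxdist).mp hvx
    have hinjOn : Set.InjOn f ↑(S.filter (· ≤ C' ⟨(i : ℕ), h⟩)) := by
      intro v₁ hv₁ v₂ hv₂ hfe
      rw [Finset.mem_coe] at hv₁ hv₂
      have hv₁' := hv₁
      have hv₂' := hv₂
      rw [Finset.mem_filter] at hv₁' hv₂'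
      have notS : ∀ (i' : Fin c) (hi' : (i' : ℕ) < c'),
          (∀ j : Fin c', Croot i' ≠ C' j) → C' ⟨(i' : ℕ), hi'⟩ ∉ S := by
        intro i' hi' hdist hmem
        obtain ⟨i'', hi''⟩ := hsurj _ hmem
        have := hmatch i'' ⟨(i' : ℕ), hi'⟩ hi''
        have hieq : i'' = i' := Fin.ext (by simp only [Fin.val_mk] at *; omega)
        rw [hieq] at hi''
        exact hdist ⟨(i' : ℕ), hi'⟩ hi''
      rcases hfspec v₁ hv₁ with ⟨h₁T, hf₁⟩ | ⟨h₁T, i₁, hi₁, hr₁, hf₁, hd₁⟩ <;>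
        rcases hfspec v₂ hv₂ with ⟨h₂T, hf₂⟩ | ⟨h₂T, i₂, hi₂, hr₂, hf₂, hd₂⟩
      · rw [hf₁, hf₂] at hfe; exact hfe
      · exfalso
        rw [hf₁, hf₂] at hfe
        exact notS i₂ hi₂ hd₂ (hfe ▸ hv₁'.1)
      · exfalso
        rw [hf₁, hf₂] at hfe
        exact notS i₁ hi₁ hd₁ (hfe.symm ▸ hv₂'.1)
      · rw [hf₁, hf₂] at hfe
        have hval := hC'inj hfe
        have hie : i₁ = i₂ := Fin.ext (by
          have := congrArg Fin.val hval
          simpa using this)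
        rw [← hr₁, ← hr₂, hie]
    have hAB : (S.filter (· ≤ C' ⟨(i : ℕ), h⟩)).card ≤
        ((Finset.image C' Finset.univ).filter (· < C' ⟨(i : ℕ), h⟩)).card :=
      Finset.card_le_card_of_injOn f hmaps hinjOn
    obtain ⟨k, hτk⟩ : ∃ k : Fin c',
        (((Finset.image C' Finset.univ).orderIsoOfFin ht) k : ℕ) = C' ⟨(i : ℕ), h⟩ := by
      refine ⟨((Finset.image C' Finset.univ).orderIsoOfFin ht).symm ⟨_, hyT⟩, ?_⟩
      rw [OrderIso.apply_symm_apply]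
    have hkc : (k : ℕ) < c := by
      have := k.2
      omega
    have hσ := hsorted k hkc
    rw [hτk] at hσ
    have hlower : (k : ℕ) + 1 ≤ (S.filter (· ≤ C' ⟨(i : ℕ), h⟩)).card := by
      have hcard : (Finset.range ((k : ℕ) + 1)).card ≤
          (S.filter (· ≤ C' ⟨(i : ℕ), h⟩)).card := by
        apply Finset.card_le_card_of_injOn
          (fun j => if hj : j < c then (S.orderIsoOfFin hScard ⟨j, hj⟩ : ℕ) else 0)
        · intro j hj
          simp only [Finset.mem_coe, Finset.mem_range] at hj ⊢
          have hjc : j < c := by omega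
          simp only [dif_pos hjc, Finset.mem_filter]
          refine ⟨(S.orderIsoOfFin hScard ⟨j, hjc⟩).2, ?_⟩
          show (S.orderIsoOfFin hScard ⟨j, hjc⟩ : ℕ) ≤ C' ⟨(i : ℕ), h⟩
          calc (S.orderIsoOfFin hScard ⟨j, hjc⟩ : ℕ)
              ≤ (S.orderIsoOfFin hScard ⟨(k : ℕ), hkc⟩ : ℕ) := by
                have hle : (⟨j, hjc⟩ : Fin c) ≤ ⟨(k : ℕ), hkc⟩ := by
                  simp only [Fin.mk_le_mk]; omega
                exact (S.orderIsoOfFin hScard).monotone hle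
            _ ≤ C' ⟨(i : ℕ), h⟩ := hσ
        · intro j₁ hj₁ j₂ hj₂ he
          simp only [Finset.coe_range, Set.mem_Iio] at hj₁ hj₂
          have hj₁c : j₁ < c := by omega
          have hj₂c : j₂ < c := by omega
          simp only [dif_pos hj₁c, dif_pos hj₂c] at he
          have := (S.orderIsoOfFin hScard).injective (Subtype.ext he)
          simpa using congrArg Fin.val this
      simpa using hcard
    have hupper : ((Finset.image C' Finset.univ).filter (· < C' ⟨(i : ℕ), h⟩)).card
        ≤ (k : ℕ) := by
      have hcard : ((Finset.image C' Finset.univ).filter (· < C' ⟨(i : ℕ), h⟩)).card ≤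
          (Finset.range (k : ℕ)).card := by
        apply Finset.card_le_card_of_injOn
          (fun v => if hv : v ∈ Finset.image C' Finset.univ then
            ((((Finset.image C' Finset.univ).orderIsoOfFin ht).symm ⟨v, hv⟩ : Fin c') : ℕ)
            else 0)
        · intro v hv
          simp only [Finset.mem_coe, Finset.mem_filter] at hv ⊢
          simp only [dif_pos hv.1, Finset.mem_range]
          have hlt2 : (⟨v, hv.1⟩ : {z // z ∈ Finset.image C' Finset.univ}) < ⟨_, hyT⟩ :=
            Subtype.mk_lt_mk.mpr hv.2
          have hmono := (((Finset.image C' Finset.univ).orderIsoOfFin ht).symm).strictMono hlt2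
          have hky : ((Finset.image C' Finset.univ).orderIsoOfFin ht).symm ⟨_, hyT⟩ = k := by
            apply_fun ((Finset.image C' Finset.univ).orderIsoOfFin ht)
            rw [OrderIso.apply_symm_apply]
            exact Subtype.ext hτk.symm
          rw [hky] at hmono
          exact hmono
        · intro v₁ hv₁ v₂ hv₂ he
          rw [Finset.mem_coe, Finset.mem_filter] at hv₁ hv₂
          simp only [dif_pos hv₁.1, dif_pos hv₂.1] at he
          have := (((Finset.image C' Finset.univ).orderIsoOfFin ht).symm).injective
            (Fin.ext he)
          simpa using congrArg Subtype.val this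
      simpa using hcard
    omega
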